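/- Let (h_n) and (a_n) be sequences of nonnegative real numbers and let C > 0 and α ≥ 0. Assume that for every r ∈ [0,1) the family (a_n · r^{h_n})_n is summable with ∑_n a_n · r^{h_n} ≤ C·(1−r)^{−α}. Then for every Schwartz function φ : ℝ → ℂ: (i) the family (a_n · ∫_ℝ exp(i·h_n·θ)·φ(θ) dθ)_n is summable; and (ii) ∫_ℝ (∑'_n a_n · r^{h_n} · exp(i·h_n·θ)) · φ(θ) dθ tends to ∑'_n a_n · ∫_ℝ exp(i·h_n·θ)·φ(θ) dθ as r → 1 from the left. -/

import Mathlib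

open MeasureTheory Filter FourierTransform
open scoped ENNReal NNReal


lemma cb_aux_integrable (y β : ℝ) (hy : 0 ≤ y) (hβ : 0 ≤ β) :
    IntervalIntegrable (fun r : ℝ => r ^ y * (1 - r) ^ β) volume 0 1 := by
  apply Continuous.intervalIntegrable
  exact (Real.continuous_rpow_const hy).mul
    ((Real.continuous_rpow_const hβ).comp (continuous_const.sub continuous_id))

lemma cb_aux_lower (α x : ℝ) (hα : 0 ≤ α) (hx : 0 ≤ x) :
    Real.exp (-1) / (α + 2) * (1 + x) ^ (-(α + 2)) ≤
      ∫ r in (0:ℝ)..1, r ^ x * (1 - r) ^ (α + 1) := by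
  have h1x : (0:ℝ) < 1 + x := by linarith
  set r0 : ℝ := x / (1 + x) with hr0
  have hr00 : 0 ≤ r0 := div_nonneg hx h1x.le
  have hr01 : r0 ≤ 1 := by
    rw [div_le_one h1x]; linarith
  have h1r0 : 1 - r0 = 1 / (1 + x) := by
    rw [hr0]; field_simp; ring
  -- exp(-1) ≤ r0 ^ x
  have hkey : Real.exp (-1) ≤ r0 ^ x := by
    rcases hx.eq_or_lt with hx0 | hx0
    · rw [← hx0, Real.rpow_zero]
      exact (Real.exp_le_one_iff.2 (by norm_num)).trans (by norm_num)
    · have hr0pos : 0 < r0 := div_pos hx0 h1x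
      rw [Real.rpow_def_of_pos hr0pos, Real.exp_le_exp]
      have hlog : Real.log ((1 + x) / x) ≤ (1 + x) / x - 1 :=
        Real.log_le_sub_one_of_pos (div_pos h1x hx0)
      have h2 : (1 + x) / x - 1 = 1 / x := by field_simp; ring
      have h3 : Real.log r0 = - Real.log ((1 + x) / x) := by
        rw [hr0, ← Real.log_inv]
        congr 1
        field_simp
      rw [h3]
      have := mul_le_mul_of_nonneg_left (hlog.trans h2.le) hx0.le
      rw [mul_one_div, div_self hx0.ne'] at this
      nlinarith
  -- ∫ over [r0,1] of exp(-1)*(1-r)^(α+1)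
  have hint1 : IntervalIntegrable (fun r : ℝ => Real.exp (-1) * (1 - r) ^ (α + 1))
      volume r0 1 := by
    apply Continuous.intervalIntegrable
    exact continuous_const.mul
      ((Real.continuous_rpow_const (by linarith)).comp (continuous_const.sub continuous_id))
  have hint2 : IntervalIntegrable (fun r : ℝ => r ^ x * (1 - r) ^ (α + 1)) volume r0 1 :=
    (cb_aux_integrable x (α + 1) hx (by linarith)).mono_set
      (by rw [Set.uIcc_of_le hr01, Set.uIcc_of_le (by norm_num : (0:ℝ) ≤ 1)]
          exact Set.Icc_subset_Icc hr00 le_rfl)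
  have step1 : (∫ r in r0..1, Real.exp (-1) * (1 - r) ^ (α + 1)) ≤
      ∫ r in r0..1, r ^ x * (1 - r) ^ (α + 1) := by
    apply intervalIntegral.integral_mono_on hr01 hint1 hint2
    intro r hr
    have h1 : Real.exp (-1) ≤ r ^ x := hkey.trans (Real.rpow_le_rpow hr00 hr.1 hx)
    have h2 : (0:ℝ) ≤ (1 - r) ^ (α + 1) := Real.rpow_nonneg (by linarith [hr.2]) _
    exact mul_le_mul_of_nonneg_right h1 h2
  have step2 : (∫ r in r0..1, r ^ x * (1 - r) ^ (α + 1)) ≤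
      ∫ r in (0:ℝ)..1, r ^ x * (1 - r) ^ (α + 1) := by
    apply intervalIntegral.integral_mono_interval hr00 hr01 le_rfl
    · filter_upwards [ae_restrict_mem measurableSet_Ioc] with r hr
      exact mul_nonneg (Real.rpow_nonneg hr.1.le _) (Real.rpow_nonneg (by linarith [hr.2]) _)
    · exact cb_aux_integrable x (α + 1) hx (by linarith)
  -- compute the left integral
  have hcalc : (∫ r in r0..1, (1 - r) ^ (α + 1)) = (1 + x) ^ (-(α + 2)) / (α + 2) := by
    have := intervalIntegral.integral_comp_sub_left (a := r0) (b := 1)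
      (fun u : ℝ => u ^ (α + 1)) 1
    rw [show (1:ℝ) - 1 = 0 by ring] at this
    rw [this, integral_rpow (Or.inl (by linarith))]
    rw [Real.zero_rpow (by linarith : α + 1 + 1 ≠ 0), h1r0]
    rw [show α + 1 + 1 = α + 2 by ring, one_div, Real.inv_rpow h1x.le,
      ← Real.rpow_neg h1x.le]
    ring
  have hfinal : (∫ r in r0..1, Real.exp (-1) * (1 - r) ^ (α + 1)) =
      Real.exp (-1) / (α + 2) * (1 + x) ^ (-(α + 2)) := by
    rw [intervalIntegral.integral_const_mul, hcalc]
    ring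
  linarith [hfinal ▸ step1.trans step2]


lemma cb_aux_summable (h a : ℕ → ℝ) (hh : ∀ n, 0 ≤ h n) (ha : ∀ n, 0 ≤ a n)
    (C α : ℝ) (hC : 0 < C) (hα : 0 ≤ α)
    (hsum : ∀ r ∈ Set.Ico (0:ℝ) 1, Summable (fun n => a n * r ^ h n) ∧
      ∑' n, a n * r ^ h n ≤ C * (1 - r) ^ (-α)) :
    Summable (fun n => a n * (1 + h n) ^ (-(α + 2))) := by
  apply summable_of_sum_le (c := Real.exp 1 * (α + 2) * C)
  · intro n
    exact mul_nonneg (ha n) (Real.rpow_nonneg (by linarith [hh n]) _)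
  · intro S
    have hprod : Real.exp 1 * Real.exp (-1) = 1 := by rw [← Real.exp_add]; norm_num
    have h2 : (0:ℝ) < α + 2 := by linarith
    have key : ∀ n, a n * (1 + h n) ^ (-(α + 2)) ≤
        Real.exp 1 * (α + 2) * ∫ r in (0:ℝ)..1, a n * (r ^ h n * (1 - r) ^ (α + 1)) := by
      intro n
      rw [intervalIntegral.integral_const_mul, ← mul_assoc,
        mul_comm (Real.exp 1 * (α + 2)) (a n), mul_assoc]
      apply mul_le_mul_of_nonneg_left _ (ha n)
      calc (1 + h n) ^ (-(α + 2))
          = Real.exp 1 * (α + 2) * (Real.exp (-1) / (α + 2) * (1 + h n) ^ (-(α + 2))) := by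
            rw [Real.exp_neg] at hprod ⊢
            field_simp
        _ ≤ Real.exp 1 * (α + 2) * ∫ r in (0:ℝ)..1, r ^ h n * (1 - r) ^ (α + 1) := by
            exact mul_le_mul_of_nonneg_left (cb_aux_lower α (h n) hα (hh n)) (by positivity)
    calc ∑ n ∈ S, a n * (1 + h n) ^ (-(α + 2))
        ≤ ∑ n ∈ S, Real.exp 1 * (α + 2) *
            ∫ r in (0:ℝ)..1, a n * (r ^ h n * (1 - r) ^ (α + 1)) :=
          Finset.sum_le_sum fun n _ => key n
      _ = Real.exp 1 * (α + 2) *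
            ∫ r in (0:ℝ)..1, ∑ n ∈ S, a n * (r ^ h n * (1 - r) ^ (α + 1)) := by
          rw [← Finset.mul_sum, intervalIntegral.integral_finset_sum]
          intro n _
          exact (cb_aux_integrable (h n) (α + 1) (hh n) (by linarith)).const_mul (a n)
      _ ≤ Real.exp 1 * (α + 2) * C := by
          apply mul_le_mul_of_nonneg_left _ (by positivity)
          have hi : IntervalIntegrable
              (fun r : ℝ => ∑ n ∈ S, a n * (r ^ h n * (1 - r) ^ (α + 1))) volume 0 1 :=
            by
            apply Continuous.intervalIntegrable
            apply continuous_finset_sum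
            intro n _
            exact continuous_const.mul ((Real.continuous_rpow_const (hh n)).mul
              ((Real.continuous_rpow_const (by linarith : (0:ℝ) ≤ α + 1)).comp
                (continuous_const.sub continuous_id)))
          have hptw : ∀ r ∈ Set.Icc (0:ℝ) 1,
              ∑ n ∈ S, a n * (r ^ h n * (1 - r) ^ (α + 1)) ≤ C := by
            intro r hr
            rcases eq_or_lt_of_le hr.2 with h1 | h1
            · simp [h1, Real.zero_rpow (show α + 1 ≠ 0 by linarith)]
              exact hC.le
            · obtain ⟨hs, hbd⟩ := hsum r ⟨hr.1, h1⟩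
              have h0r : (0:ℝ) < 1 - r := by linarith
              calc ∑ n ∈ S, a n * (r ^ h n * (1 - r) ^ (α + 1))
                  = (∑ n ∈ S, a n * r ^ h n) * (1 - r) ^ (α + 1) := by
                    rw [Finset.sum_mul]
                    exact Finset.sum_congr rfl fun n _ => by ring
                _ ≤ C * (1 - r) ^ (-α) * (1 - r) ^ (α + 1) := by
                    apply mul_le_mul_of_nonneg_right _ (Real.rpow_nonneg h0r.le _)
                    exact le_trans (hs.sum_le_tsum S
                      (fun n _ => mul_nonneg (ha n) (Real.rpow_nonneg hr.1 _))) hbd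
                _ = C * (1 - r) := by
                    rw [mul_assoc, ← Real.rpow_add h0r,
                      show -α + (α + 1) = 1 by ring, Real.rpow_one]
                _ ≤ C := by nlinarith [hr.1]
          have hb := intervalIntegral.integral_mono_on (by norm_num : (0:ℝ) ≤ 1)
            hi intervalIntegrable_const hptw
          simpa using hb


lemma cb_aux_fourier_eq (φ : SchwartzMap ℝ ℂ) (x : ℝ) :
    (∫ θ : ℝ, Complex.exp (Complex.I * (x:ℂ) * (θ:ℂ)) * φ θ) =
      SchwartzMap.fourierTransformCLM ℝ φ (-x / (2 * Real.pi)) := by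
  rw [SchwartzMap.fourierTransformCLM_apply, SchwartzMap.fourier_coe,
    Real.fourier_real_eq_integral_exp_smul]
  congr 1
  funext θ
  rw [smul_eq_mul]
  congr 2
  have hπ := Real.pi_ne_zero
  have harg : -2 * Real.pi * θ * (-x / (2 * Real.pi)) = x * θ := by
    field_simp
  rw [harg]
  push_cast
  ring

lemma cb_aux_fourier_decay (α : ℝ) (hα : 0 ≤ α) (φ : SchwartzMap ℝ ℂ) :
    ∃ K : ℝ, 0 ≤ K ∧ ∀ x : ℝ, 0 ≤ x →
      ‖∫ θ : ℝ, Complex.exp (Complex.I * (x:ℂ) * (θ:ℂ)) * φ θ‖ ≤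
        K * (1 + x) ^ (-(α + 2)) := by
  set ψ := SchwartzMap.fourierTransformCLM ℝ φ with hψdef
  set k : ℕ := ⌈α⌉₊ + 2 with hk
  set M : ℝ := 2 ^ k * (Finset.Iic (k, 0)).sup
    (fun m => SchwartzMap.seminorm ℝ m.1 m.2) ψ with hM
  have hψ : ∀ y : ℝ, ‖ψ y‖ * (1 + ‖y‖) ^ k ≤ M := by
    intro y
    have := SchwartzMap.one_add_le_sup_seminorm_apply (𝕜 := ℝ) (m := (k, 0))
      le_rfl le_rfl ψ y
    rwa [norm_iteratedFDeriv_zero, mul_comm] at this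
  have hM0 : 0 ≤ M := le_trans (by positivity) (hψ 0)
  refine ⟨8 ^ k * M, by positivity, ?_⟩
  intro x hx
  rw [cb_aux_fourier_eq φ x]
  set y : ℝ := -x / (2 * Real.pi) with hy
  have hπ := Real.pi_pos
  have hπ4 := Real.pi_le_four
  have hny : ‖y‖ = x / (2 * Real.pi) := by
    rw [hy, Real.norm_eq_abs, abs_div, abs_neg, abs_of_nonneg hx,
      abs_of_pos (by linarith)]
  have h8 : 1 + x ≤ 8 * (1 + ‖y‖) := by
    rw [hny]
    have h2 : x / 8 ≤ x / (2 * Real.pi) := by gcongr <;> linarith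
    linarith
  have h1x : (0:ℝ) < 1 + x := by linarith
  have hpow : (1 + x) ^ k ≤ 8 ^ k * (1 + ‖y‖) ^ k := by
    rw [← mul_pow]
    exact pow_le_pow_left₀ h1x.le h8 k
  have hmain : ‖ψ y‖ * (1 + x) ^ k ≤ 8 ^ k * M := by
    calc ‖ψ y‖ * (1 + x) ^ k ≤ ‖ψ y‖ * (8 ^ k * (1 + ‖y‖) ^ k) :=
          mul_le_mul_of_nonneg_left hpow (norm_nonneg _)
      _ = 8 ^ k * (‖ψ y‖ * (1 + ‖y‖) ^ k) := by ring
      _ ≤ 8 ^ k * M := mul_le_mul_of_nonneg_left (hψ y) (by positivity)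
  have hstep : ‖ψ y‖ ≤ 8 ^ k * M * (1 + x) ^ (-(k:ℝ)) := by
    rw [Real.rpow_neg h1x.le, Real.rpow_natCast]
    have h2 := (le_div_iff₀ (by positivity : (0:ℝ) < (1 + x) ^ k)).2 hmain
    rwa [div_eq_mul_inv] at h2
  refine hstep.trans ?_
  apply mul_le_mul_of_nonneg_left _ (by positivity)
  apply Real.rpow_le_rpow_of_exponent_le (by linarith)
  have := Nat.le_ceil α
  rw [hk]
  push_cast
  linarith


/-- Distributional convergence of the conformal block expansion on the boundary
of the unit disk (one cross-ratio, `d = 1` case). -/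
theorem cb_expansion_boundary_distributional_convergence_1d
    (h a : ℕ → ℝ) (hh : ∀ n, 0 ≤ h n) (ha : ∀ n, 0 ≤ a n)
    (C α : ℝ) (hC : 0 < C) (hα : 0 ≤ α)
    (hsum : ∀ r ∈ Set.Ico (0:ℝ) 1,
      Summable (fun n => a n * r ^ h n) ∧
      ∑' n, a n * r ^ h n ≤ C * (1 - r) ^ (-α))
    (φ : SchwartzMap ℝ ℂ) :
    Summable (fun n => (a n : ℂ) *
        ∫ θ : ℝ, Complex.exp (Complex.I * (h n : ℂ) * (θ : ℂ)) * φ θ) ∧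
    Tendsto (fun r : ℝ =>
        ∫ θ : ℝ,
          (∑' n, ((a n * r ^ h n : ℝ) : ℂ) *
            Complex.exp (Complex.I * (h n : ℂ) * (θ : ℂ))) * φ θ)
      (nhdsWithin 1 (Set.Iio 1))
      (nhds (∑' n, (a n : ℂ) *
        ∫ θ : ℝ, Complex.exp (Complex.I * (h n : ℂ) * (θ : ℂ)) * φ θ)) := by
  obtain ⟨K, hK0, hK⟩ := cb_aux_fourier_decay α hα φ
  have hS0 : Summable (fun n => a n * (1 + h n) ^ (-(α + 2))) :=
    cb_aux_summable h a hh ha C α hC hα hsum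
  set G : ℕ → ℂ := fun n =>
    ∫ θ : ℝ, Complex.exp (Complex.I * (h n : ℂ) * (θ : ℂ)) * φ θ with hG
  have hGbound : ∀ n, ‖G n‖ ≤ K * (1 + h n) ^ (-(α + 2)) := fun n => hK (h n) (hh n)
  have hbnd : ∀ n, ‖(a n : ℂ) * G n‖ ≤ K * (a n * (1 + h n) ^ (-(α + 2))) := by
    intro n
    rw [norm_mul, Complex.norm_real, Real.norm_eq_abs, abs_of_nonneg (ha n)]
    calc a n * ‖G n‖ ≤ a n * (K * (1 + h n) ^ (-(α + 2))) :=
          mul_le_mul_of_nonneg_left (hGbound n) (ha n)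
      _ = K * (a n * (1 + h n) ^ (-(α + 2))) := by ring
  have hs1 : Summable (fun n => (a n : ℂ) * G n) :=
    Summable.of_norm_bounded (hS0.mul_left K) hbnd
  refine ⟨hs1, ?_⟩
  have hmem : Set.Ioo (0:ℝ) 1 ∈ nhdsWithin 1 (Set.Iio 1) :=
    Ioo_mem_nhdsLT_of_mem ⟨zero_lt_one, le_rfl⟩
  -- Step A: swap integral and sum for r ∈ (0,1)
  have hEq : ∀ r ∈ Set.Ioo (0:ℝ) 1,
      (∫ θ : ℝ, (∑' n, ((a n * r ^ h n : ℝ) : ℂ) *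
          Complex.exp (Complex.I * (h n : ℂ) * (θ : ℂ))) * φ θ)
        = ∑' n, ((a n * r ^ h n : ℝ) : ℂ) * G n := by
    intro r hr
    obtain ⟨hs, _⟩ := hsum r ⟨hr.1.le, hr.2⟩
    have hc0 : ∀ n, 0 ≤ a n * r ^ h n := fun n =>
      mul_nonneg (ha n) (Real.rpow_nonneg hr.1.le _)
    have hmeas : ∀ n, AEStronglyMeasurable (fun θ : ℝ =>
        ((a n * r ^ h n : ℝ) : ℂ) *
          Complex.exp (Complex.I * (h n : ℂ) * (θ : ℂ)) * φ θ) volume := by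
      intro n
      apply Continuous.aestronglyMeasurable
      exact (continuous_const.mul (Complex.continuous_exp.comp
        (continuous_const.mul Complex.continuous_ofReal))).mul φ.continuous
    have hexp : ∀ (n : ℕ) (θ : ℝ),
        ‖Complex.exp (Complex.I * (h n : ℂ) * (θ : ℂ))‖₊ = 1 := by
      intro n θ
      have h1 : Complex.I * (h n : ℂ) * (θ : ℂ) = ((h n * θ : ℝ) : ℂ) * Complex.I := by
        push_cast; ring
      apply NNReal.coe_injective
      rw [coe_nnnorm, h1, Complex.norm_exp_ofReal_mul_I, NNReal.coe_one]
    have hlint : ∑' n, ∫⁻ θ : ℝ, ‖((a n * r ^ h n : ℝ) : ℂ) *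
        Complex.exp (Complex.I * (h n : ℂ) * (θ : ℂ)) * φ θ‖₊ ≠ ⊤ := by
      have hφint := φ.integrable (μ := volume)
      have hL : (∫⁻ θ : ℝ, ‖φ θ‖₊) ≠ ⊤ := hφint.2.ne
      have heq : ∀ n, (∫⁻ θ : ℝ, ‖((a n * r ^ h n : ℝ) : ℂ) *
          Complex.exp (Complex.I * (h n : ℂ) * (θ : ℂ)) * φ θ‖₊)
            = (‖a n * r ^ h n‖₊ : ℝ≥0∞) * ∫⁻ θ : ℝ, ‖φ θ‖₊ := by
        intro n
        rw [← lintegral_const_mul' _ _ ENNReal.coe_ne_top]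
        congr 1
        funext θ
        rw [nnnorm_mul, nnnorm_mul, Complex.nnnorm_real, hexp n θ, mul_one,
          ENNReal.coe_mul]
      simp_rw [heq]
      rw [ENNReal.tsum_mul_right]
      apply ENNReal.mul_ne_top _ hL
      rw [ENNReal.tsum_coe_ne_top_iff_summable]
      apply NNReal.summable_coe.1
      have h2 : ∀ n, (‖a n * r ^ h n‖₊ : ℝ) = a n * r ^ h n := fun n => by
        rw [coe_nnnorm, Real.norm_eq_abs, abs_of_nonneg (hc0 n)]
      exact hs.congr fun n => (h2 n).symm
    calc (∫ θ : ℝ, (∑' n, ((a n * r ^ h n : ℝ) : ℂ) *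
          Complex.exp (Complex.I * (h n : ℂ) * (θ : ℂ))) * φ θ)
        = ∫ θ : ℝ, ∑' n, ((a n * r ^ h n : ℝ) : ℂ) *
            Complex.exp (Complex.I * (h n : ℂ) * (θ : ℂ)) * φ θ := by
          congr 1
          funext θ
          exact (tsum_mul_right).symm
      _ = ∑' n, ∫ θ : ℝ, ((a n * r ^ h n : ℝ) : ℂ) *
            Complex.exp (Complex.I * (h n : ℂ) * (θ : ℂ)) * φ θ :=
          integral_tsum hmeas hlint
      _ = ∑' n, ((a n * r ^ h n : ℝ) : ℂ) * G n := by
          apply tsum_congr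
          intro n
          simp_rw [mul_assoc]
          rw [integral_const_mul]
          simp only [hG]
          simp_rw [← mul_assoc]
  -- Step B: dominated convergence for sums
  have hTend : Tendsto (fun r : ℝ => ∑' n, ((a n * r ^ h n : ℝ) : ℂ) * G n)
      (nhdsWithin 1 (Set.Iio 1)) (nhds (∑' n, (a n : ℂ) * G n)) := by
    apply tendsto_tsum_of_dominated_convergence
      (bound := fun n => K * (a n * (1 + h n) ^ (-(α + 2)))) (hS0.mul_left K)
    · intro n
      have h0 : ContinuousAt (fun r : ℝ => r ^ h n) 1 :=
        Real.continuousAt_rpow_const 1 (h n) (Or.inl one_ne_zero)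
      have t1 : Tendsto (fun r : ℝ => a n * r ^ h n) (nhds 1)
          (nhds (a n)) := by
        have h2 := (h0.tendsto.const_mul (a n))
        simpa [Real.one_rpow] using h2
      have t2 : Tendsto (fun r : ℝ => ((a n * r ^ h n : ℝ) : ℂ)) (nhds 1)
          (nhds ((a n : ℂ))) :=
        (Complex.continuous_ofReal.tendsto (a n)).comp t1
      exact (t2.mono_left nhdsWithin_le_nhds).mul_const (G n)
    · filter_upwards [hmem] with r hr n
      have hc0 : 0 ≤ a n * r ^ h n := mul_nonneg (ha n) (Real.rpow_nonneg hr.1.le _)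
      rw [norm_mul, Complex.norm_real, Real.norm_eq_abs, abs_of_nonneg hc0]
      have hr1 : r ^ h n ≤ 1 := Real.rpow_le_one hr.1.le hr.2.le (hh n)
      calc a n * r ^ h n * ‖G n‖ ≤ a n * ‖G n‖ :=
            mul_le_mul_of_nonneg_right (mul_le_of_le_one_right (ha n) hr1)
              (norm_nonneg (G n))
        _ ≤ a n * (K * (1 + h n) ^ (-(α + 2))) :=
            mul_le_mul_of_nonneg_left (hGbound n) (ha n)
        _ = K * (a n * (1 + h n) ^ (-(α + 2))) := by ring
  have hEE : (fun r : ℝ => ∑' n, ((a n * r ^ h n : ℝ) : ℂ) * G n)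
      =ᶠ[nhdsWithin 1 (Set.Iio 1)]
      (fun r : ℝ => ∫ θ : ℝ, (∑' n, ((a n * r ^ h n : ℝ) : ℂ) *
        Complex.exp (Complex.I * (h n : ℂ) * (θ : ℂ))) * φ θ) := by
    filter_upwards [hmem] with r hr
    exact (hEq r hr).symm
  exact Tendsto.congr' hEE hTend
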